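/- Let 𝓑 = Σ_{i,j=1}^n p_{ij} A_i ⊗ B_j be a bipartite correlation Bell operator, and suppose Q is a constant such that tr(ρ𝓑) ≤ Q for all states ρ and all choices of observables A_i, B_j with spectrum in [−1,1]. Let W be an observable on Bob's Hilbert space with spectrum in [−1,1] that anticommutes with every B_j. Then tr(ρ𝓑) ≤ Q·√(1 − (tr(ρW))²). -/

import Mathlib

open Matrix Kronecker ComplexOrder

namespace BellAux

variable {k : Type*} [Fintype k] [DecidableEq k]

lemma trace_nonneg_of_psd {N : Matrix k k ℂ} (hN : N.PosSemidef) : 0 ≤ N.trace := by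
  rw [Matrix.trace]
  apply Finset.sum_nonneg
  intro i _
  have := hN.dotProduct_mulVec_nonneg (Pi.single i 1)
  simpa [Matrix.mulVec, dotProduct, Pi.single_apply, Finset.mul_sum, apply_ite] using this

lemma posSemidef_exists_conjTranspose_mul {N : Matrix k k ℂ} (hN : N.PosSemidef) :
    ∃ C : Matrix k k ℂ, N = Cᴴ * C := by
  open scoped MatrixOrder in
  have h0 : 0 ≤ N := hN.nonneg
  open scoped MatrixOrder in
  exact ⟨CFC.sqrt N, by
    rw [← Matrix.star_eq_conjTranspose, (CFC.sqrt_nonneg N).isSelfAdjoint.star_eq,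
      CFC.sqrt_mul_sqrt_self N h0]⟩

lemma trace_mul_psd_nonneg {ρ N : Matrix k k ℂ} (hρ : ρ.PosSemidef) (hN : N.PosSemidef) :
    0 ≤ (ρ * N).trace := by
  obtain ⟨C, rfl⟩ := posSemidef_exists_conjTranspose_mul hN
  have h1 : (ρ * (Cᴴ * C)).trace = (C * ρ * Cᴴ).trace := by
    rw [← Matrix.mul_assoc, Matrix.trace_mul_cycle]
  rw [h1]
  exact trace_nonneg_of_psd (hρ.mul_mul_conjTranspose_same C)

lemma exp_le_of_psd {ρ M : Matrix k k ℂ} {c : ℝ} (hρ : ρ.PosSemidef) (hρtr : ρ.trace = 1)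
    (h : ((c : ℂ) • (1 : Matrix k k ℂ) - M).PosSemidef) : ((ρ * M).trace).re ≤ c := by
  have h0 := trace_mul_psd_nonneg hρ h
  have h1 : (ρ * ((c : ℂ) • (1 : Matrix k k ℂ) - M)).trace = (c : ℂ) - (ρ * M).trace := by
    rw [Matrix.mul_sub, Matrix.trace_sub, Matrix.mul_smul, Matrix.mul_one, Matrix.trace_smul,
      hρtr, smul_eq_mul, mul_one]
  rw [h1] at h0
  have := (Complex.nonneg_iff.mp h0).1
  simp at this
  linarith

variable {M : Matrix k k ℂ}

lemma U_mul_star (hM : M.IsHermitian) :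
    (hM.eigenvectorUnitary : Matrix k k ℂ) * star (hM.eigenvectorUnitary : Matrix k k ℂ) = 1 :=
  (Matrix.mem_unitaryGroup_iff).mp (hM.eigenvectorUnitary).2

lemma star_mul_U (hM : M.IsHermitian) :
    star (hM.eigenvectorUnitary : Matrix k k ℂ) * (hM.eigenvectorUnitary : Matrix k k ℂ) = 1 :=
  (Matrix.mem_unitaryGroup_iff').mp (hM.eigenvectorUnitary).2

lemma herm_conj_diag (hM : M.IsHermitian) (c : ℂ) :
    c • (1 : Matrix k k ℂ) - M
      = (hM.eigenvectorUnitary : Matrix k k ℂ)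
          * diagonal (fun i => c - (hM.eigenvalues i : ℂ))
          * star (hM.eigenvectorUnitary : Matrix k k ℂ) := by
  set U : Matrix k k ℂ := (hM.eigenvectorUnitary : Matrix k k ℂ) with hU
  have h1 : c • (1 : Matrix k k ℂ) = U * (c • (1 : Matrix k k ℂ)) * star U := by
    rw [Matrix.mul_smul, Matrix.mul_one, Matrix.smul_mul, U_mul_star hM]
  have h2 : c • (1 : Matrix k k ℂ) - diagonal (RCLike.ofReal ∘ hM.eigenvalues)
      = diagonal (fun i => c - (hM.eigenvalues i : ℂ)) := by
    rw [← Matrix.diagonal_one, ← Matrix.diagonal_smul, Matrix.diagonal_sub]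
    congr 1
    ext j
    simp [Function.comp]
  conv_lhs => rw [h1, hM.spectral_theorem]
  rw [Unitary.conjStarAlgAut_apply, ← hU]
  rw [← Matrix.sub_mul, ← Matrix.mul_sub, h2]

lemma sq_spectral (hM : M.IsHermitian) :
    M * M = (hM.eigenvectorUnitary : Matrix k k ℂ)
          * diagonal (fun i => ((hM.eigenvalues i : ℂ)) ^ 2)
          * star (hM.eigenvectorUnitary : Matrix k k ℂ) := by
  set U : Matrix k k ℂ := (hM.eigenvectorUnitary : Matrix k k ℂ) with hU
  conv_lhs => rw [hM.spectral_theorem]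
  rw [Unitary.conjStarAlgAut_apply, ← hU]
  rw [show U * diagonal (RCLike.ofReal ∘ hM.eigenvalues) * star U
        * (U * diagonal (RCLike.ofReal ∘ hM.eigenvalues) * star U)
      = U * diagonal (RCLike.ofReal ∘ hM.eigenvalues) * (star U * U)
        * diagonal (RCLike.ofReal ∘ hM.eigenvalues) * star U by
    simp only [Matrix.mul_assoc]]
  rw [star_mul_U hM, Matrix.mul_one, Matrix.mul_assoc U, Matrix.diagonal_mul_diagonal]
  congr 1
  congr 1
  ext i
  simp [sq]

lemma herm_conj_diag_sq (hM : M.IsHermitian) (c : ℂ) :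
    c • (1 : Matrix k k ℂ) - M * M
      = (hM.eigenvectorUnitary : Matrix k k ℂ)
          * diagonal (fun i => c - (hM.eigenvalues i : ℂ) ^ 2)
          * star (hM.eigenvectorUnitary : Matrix k k ℂ) := by
  set U : Matrix k k ℂ := (hM.eigenvectorUnitary : Matrix k k ℂ) with hU
  have h1 : c • (1 : Matrix k k ℂ) = U * (c • (1 : Matrix k k ℂ)) * star U := by
    rw [Matrix.mul_smul, Matrix.mul_one, Matrix.smul_mul, U_mul_star hM]
  have h2 : c • (1 : Matrix k k ℂ) - diagonal (fun i => ((hM.eigenvalues i : ℂ)) ^ 2)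
      = diagonal (fun i => c - (hM.eigenvalues i : ℂ) ^ 2) := by
    rw [← Matrix.diagonal_one, ← Matrix.diagonal_smul, Matrix.diagonal_sub]
    congr 1
    ext j
    simp
  conv_lhs => rw [h1, sq_spectral hM]
  rw [← Matrix.sub_mul, ← Matrix.mul_sub, h2]

/-- for each eigenvalue there is a state whose expectation is that eigenvalue -/
lemma exp_eigen (hM : M.IsHermitian) (i : k) :
    ∃ ρ : Matrix k k ℂ, ρ.PosSemidef ∧ ρ.trace = 1 ∧ (ρ * M).trace = (hM.eigenvalues i : ℂ) := by
  set U : Matrix k k ℂ := (hM.eigenvectorUnitary : Matrix k k ℂ) with hU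
  refine ⟨U * diagonal (Pi.single i 1) * star U, ?_, ?_, ?_⟩
  · have hd : (diagonal (Pi.single i 1) : Matrix k k ℂ).PosSemidef := by
      refine Matrix.posSemidef_diagonal_iff.mpr fun j => ?_
      rcases eq_or_ne j i with rfl | h
      · simp
      · simp [Pi.single_apply, h]
    simpa [Matrix.star_eq_conjTranspose] using hd.mul_mul_conjTranspose_same U
  · rw [Matrix.trace_mul_cycle, star_mul_U hM, Matrix.one_mul]
    simp [Matrix.trace_diagonal]
  · conv_lhs => rw [hM.spectral_theorem]
    rw [Unitary.conjStarAlgAut_apply, ← hU]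
    rw [show U * diagonal (Pi.single i 1) * star U
          * (U * diagonal (RCLike.ofReal ∘ hM.eigenvalues) * star U)
        = U * diagonal (Pi.single i 1) * (star U * U)
          * diagonal (RCLike.ofReal ∘ hM.eigenvalues) * star U by simp only [Matrix.mul_assoc]]
    rw [star_mul_U hM, Matrix.mul_one, Matrix.mul_assoc U, Matrix.diagonal_mul_diagonal]
    rw [Matrix.trace_mul_cycle, star_mul_U hM, Matrix.one_mul]
    rw [Matrix.trace_diagonal]
    rw [Finset.sum_eq_single i]
    · simp
    · intro j _ hj; simp [Pi.single_apply, hj]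
    · intro h; exact absurd (Finset.mem_univ i) h

lemma eig_sq_le_of_psd (hM : M.IsHermitian) {c : ℝ}
    (h : (((c : ℂ) ^ 2) • (1 : Matrix k k ℂ) - M * M).PosSemidef) (i : k) :
    (hM.eigenvalues i) ^ 2 ≤ c ^ 2 := by
  set U : Matrix k k ℂ := (hM.eigenvectorUnitary : Matrix k k ℂ) with hU
  have hc := h.conjTranspose_mul_mul_same U
  rw [← Matrix.star_eq_conjTranspose] at hc
  have heq : star U * (((c : ℂ) ^ 2) • (1 : Matrix k k ℂ) - M * M) * U
      = diagonal (fun i => (c : ℂ) ^ 2 - (hM.eigenvalues i : ℂ) ^ 2) := by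
    rw [herm_conj_diag_sq hM]
    rw [show star U * (U * diagonal (fun i => (c : ℂ) ^ 2 - (hM.eigenvalues i : ℂ) ^ 2) * star U) * U
        = (star U * U) * diagonal (fun i => (c : ℂ) ^ 2 - (hM.eigenvalues i : ℂ) ^ 2) * (star U * U)
        by simp only [Matrix.mul_assoc]]
    rw [star_mul_U hM, Matrix.one_mul, Matrix.mul_one]
  rw [heq] at hc
  have := Matrix.posSemidef_diagonal_iff.mp hc i
  have h2 : ((c ^ 2 - hM.eigenvalues i ^ 2 : ℝ) : ℂ) = (c : ℂ) ^ 2 - (hM.eigenvalues i : ℂ) ^ 2 := by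
    push_cast; ring
  rw [← h2, Complex.zero_le_real] at this
  linarith

lemma psd_lin_of_eig (hM : M.IsHermitian) {c : ℝ} (hc0 : 0 ≤ c)
    (h : ∀ i, (hM.eigenvalues i) ^ 2 ≤ c ^ 2) :
    ((c : ℂ) • (1 : Matrix k k ℂ) - M).PosSemidef := by
  rw [herm_conj_diag hM, Matrix.star_eq_conjTranspose]
  refine (Matrix.posSemidef_diagonal_iff.mpr fun i => ?_).mul_mul_conjTranspose_same _
  have h1 : 0 ≤ c - hM.eigenvalues i := by nlinarith [h i]
  have h2 : ((c - hM.eigenvalues i : ℝ) : ℂ) = (c : ℂ) - (hM.eigenvalues i : ℂ) := by push_cast; ring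
  rw [← h2, Complex.zero_le_real]
  exact h1

lemma sq_psd_of_eig (hM : M.IsHermitian) {c : ℝ}
    (h : ∀ i, (hM.eigenvalues i) ^ 2 ≤ c ^ 2) :
    (((c : ℂ) ^ 2) • (1 : Matrix k k ℂ) - M * M).PosSemidef := by
  rw [herm_conj_diag_sq hM, Matrix.star_eq_conjTranspose]
  refine (Matrix.posSemidef_diagonal_iff.mpr fun i => ?_).mul_mul_conjTranspose_same _
  have h2 : ((c ^ 2 - hM.eigenvalues i ^ 2 : ℝ) : ℂ) = (c : ℂ) ^ 2 - (hM.eigenvalues i : ℂ) ^ 2 := by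
    push_cast; ring
  rw [← h2, Complex.zero_le_real]
  linarith [h i]

lemma exp_le_of_sq_psd (hM : M.IsHermitian) {s : ℝ} (hs : 0 ≤ s)
    (h : (((s : ℂ) ^ 2) • (1 : Matrix k k ℂ) - M * M).PosSemidef)
    {ρ : Matrix k k ℂ} (hρ : ρ.PosSemidef) (hρtr : ρ.trace = 1) :
    ((ρ * M).trace).re ≤ s :=
  exp_le_of_psd hρ hρtr (psd_lin_of_eig hM hs (fun i => eig_sq_le_of_psd hM h i))

lemma sq_psd_of_exp (hM : M.IsHermitian) {c : ℝ}
    (h1 : ∀ ρ : Matrix k k ℂ, ρ.PosSemidef → ρ.trace = 1 → ((ρ * M).trace).re ≤ c)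
    (h2 : ∀ ρ : Matrix k k ℂ, ρ.PosSemidef → ρ.trace = 1 → ((ρ * (-M)).trace).re ≤ c) :
    (((c : ℂ) ^ 2) • (1 : Matrix k k ℂ) - M * M).PosSemidef := by
  refine sq_psd_of_eig hM fun i => ?_
  obtain ⟨ρ, hρ, htr, hev⟩ := exp_eigen hM i
  have a1 := h1 ρ hρ htr
  rw [hev] at a1
  simp at a1
  have a2 := h2 ρ hρ htr
  rw [Matrix.mul_neg, Matrix.trace_neg, hev] at a2
  simp at a2
  nlinarith

lemma kron_conjT {l m o q : Type*} (A : Matrix l m ℂ) (B : Matrix o q ℂ) :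
    (A ⊗ₖ B)ᴴ = Aᴴ ⊗ₖ Bᴴ := by
  ext ⟨i, j⟩ ⟨i', j'⟩
  simp [Matrix.conjTranspose_apply, Matrix.kroneckerMap_apply, star_mul']

lemma psd_sq_smul {N : Matrix k k ℂ} (hN : N.PosSemidef) (t : ℝ) :
    (((t : ℂ) ^ 2) • N).PosSemidef := by
  rw [Matrix.posSemidef_iff_dotProduct_mulVec]
  constructor
  · show _ᴴ = _
    rw [Matrix.conjTranspose_smul, hN.1]
    congr 1
    simp [Complex.star_def]
  · intro x
    have := hN.dotProduct_mulVec_nonneg x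
    rw [Matrix.smul_mulVec, dotProduct_smul]
    have ht : (0 : ℂ) ≤ ((t ^ 2 : ℝ) : ℂ) := Complex.zero_le_real.mpr (sq_nonneg t)
    have h2 : ((t : ℂ) ^ 2) = ((t ^ 2 : ℝ) : ℂ) := by push_cast; ring
    rw [h2, smul_eq_mul]
    exact mul_nonneg ht this

end BellAux

open BellAux

/-- Theorem 2 of the paper: if Q bounds the quantum value of the correlation
Bell operator 𝓑 = Σ pᵢⱼ Aᵢ⊗Bⱼ, and W is an observable on Bob's side that
anticommutes with every Bⱼ, then tr(ρ𝓑) ≤ Q √(1 − tr(ρ(1⊗W))²). -/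
theorem bell_anticommuting_tradeoff {n : ℕ} (p : Fin n → Fin n → ℝ) (Q : ℝ)
    (hQ : ∀ (a b : ℕ) (A : Fin n → Matrix (Fin a) (Fin a) ℂ)
        (B : Fin n → Matrix (Fin b) (Fin b) ℂ),
        (∀ i, (A i).IsHermitian) → (∀ j, (B j).IsHermitian) →
        (∀ i, (1 - A i * A i).PosSemidef) → (∀ j, (1 - B j * B j).PosSemidef) →
        ∀ ρ : Matrix (Fin a × Fin b) (Fin a × Fin b) ℂ, ρ.PosSemidef → ρ.trace = 1 →
        ((ρ * ∑ i, ∑ j, p i j • (A i ⊗ₖ B j)).trace).re ≤ Q)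
    {a b : ℕ} (A : Fin n → Matrix (Fin a) (Fin a) ℂ)
    (B : Fin n → Matrix (Fin b) (Fin b) ℂ)
    (hA : ∀ i, (A i).IsHermitian) (hB : ∀ j, (B j).IsHermitian)
    (hAn : ∀ i, (1 - A i * A i).PosSemidef) (hBn : ∀ j, (1 - B j * B j).PosSemidef)
    (W : Matrix (Fin b) (Fin b) ℂ) (hW : W.IsHermitian)
    (hWn : (1 - W * W).PosSemidef)
    (hanti : ∀ j, W * B j + B j * W = 0)
    (ρ : Matrix (Fin a × Fin b) (Fin a × Fin b) ℂ)
    (hρ : ρ.PosSemidef) (hρtr : ρ.trace = 1) :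
    ((ρ * ∑ i, ∑ j, p i j • (A i ⊗ₖ B j)).trace).re ≤
      Q * Real.sqrt (1 - (((ρ * ((1 : Matrix (Fin a) (Fin a) ℂ) ⊗ₖ W)).trace).re) ^ 2) := by
  set X : Matrix (Fin a × Fin b) (Fin a × Fin b) ℂ := ∑ i, ∑ j, p i j • (A i ⊗ₖ B j) with hX
  set Y : Matrix (Fin a × Fin b) (Fin a × Fin b) ℂ := (1 : Matrix (Fin a) (Fin a) ℂ) ⊗ₖ W with hY
  -- Q is nonnegative
  have hQ0 : 0 ≤ Q := by
    have := hQ a b (fun _ => 0) (fun _ => 0) (fun _ => Matrix.isHermitian_zero)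
      (fun _ => Matrix.isHermitian_zero)
      (fun _ => by simpa using Matrix.PosSemidef.one)
      (fun _ => by simpa using Matrix.PosSemidef.one) ρ hρ hρtr
    simpa using this
  -- X is Hermitian
  have hXherm : X.IsHermitian := by
    show Xᴴ = X
    rw [hX, Matrix.conjTranspose_sum]
    refine Finset.sum_congr rfl fun i _ => ?_
    rw [Matrix.conjTranspose_sum]
    refine Finset.sum_congr rfl fun j _ => ?_
    rw [Matrix.conjTranspose_smul, kron_conjT, (hA i).eq, (hB j).eq, star_trivial]
  -- Y is Hermitian
  have hYherm : Y.IsHermitian := by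
    show Yᴴ = Y
    rw [hY, kron_conjT, Matrix.conjTranspose_one, hW.eq]
  -- upper bound on expectation of X
  have hXup : ∀ ρ' : Matrix (Fin a × Fin b) (Fin a × Fin b) ℂ,
      ρ'.PosSemidef → ρ'.trace = 1 → ((ρ' * X).trace).re ≤ Q :=
    fun ρ' h1 h2 => hQ a b A B hA hB hAn hBn ρ' h1 h2
  have hXneg : ∀ ρ' : Matrix (Fin a × Fin b) (Fin a × Fin b) ℂ,
      ρ'.PosSemidef → ρ'.trace = 1 → ((ρ' * (-X)).trace).re ≤ Q := by
    intro ρ' h1 h2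
    have := hQ a b A (fun j => -B j) hA (fun j => (hB j).neg)
      hAn (fun j => by simpa [neg_mul_neg] using hBn j) ρ' h1 h2
    have heq : (∑ i, ∑ j, p i j • (A i ⊗ₖ (-B j))) = -X := by
      rw [hX, ← Finset.sum_neg_distrib]
      refine Finset.sum_congr rfl fun i _ => ?_
      rw [← Finset.sum_neg_distrib]
      refine Finset.sum_congr rfl fun j _ => ?_
      rw [← smul_neg]
      congr 1
      ext ⟨x, y⟩ ⟨x', y'⟩
      simp [Matrix.kroneckerMap_apply]
    rwa [heq] at this
  -- X² ≤ Q²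
  have hXsq : (((Q : ℂ) ^ 2) • (1 : Matrix (Fin a × Fin b) (Fin a × Fin b) ℂ) - X * X).PosSemidef :=
    sq_psd_of_exp hXherm hXup hXneg
  -- 1 - Y² is PSD
  have hYsq : ((1 : Matrix (Fin a × Fin b) (Fin a × Fin b) ℂ) - Y * Y).PosSemidef := by
    have hYY : Y * Y = (1 : Matrix (Fin a) (Fin a) ℂ) ⊗ₖ (W * W) := by
      rw [hY, ← Matrix.mul_kronecker_mul, Matrix.one_mul]
    have h1 : (1 : Matrix (Fin a × Fin b) (Fin a × Fin b) ℂ) - Y * Y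
        = (1 : Matrix (Fin a) (Fin a) ℂ) ⊗ₖ ((1 : Matrix (Fin b) (Fin b) ℂ) - W * W) := by
      rw [hYY, ← Matrix.one_kronecker_one]
      ext ⟨x, y⟩ ⟨x', y'⟩
      by_cases hxx : x = x' <;> by_cases hyy : y = y' <;>
        simp [Matrix.sub_apply, Matrix.kroneckerMap_apply, mul_sub, Matrix.one_apply,
          Prod.ext_iff, hxx, hyy]
    rw [h1]
    obtain ⟨C, hC⟩ := posSemidef_exists_conjTranspose_mul hWn
    rw [hC, show (1 : Matrix (Fin a) (Fin a) ℂ) ⊗ₖ (Cᴴ * C)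
        = ((1 : Matrix (Fin a) (Fin a) ℂ) ⊗ₖ C)ᴴ * ((1 : Matrix (Fin a) (Fin a) ℂ) ⊗ₖ C) by
      rw [kron_conjT, Matrix.conjTranspose_one, ← Matrix.mul_kronecker_mul, Matrix.one_mul]]
    exact Matrix.posSemidef_conjTranspose_mul_self _
  -- anticommutation of X and Y
  have hanti' : X * Y + Y * X = 0 := by
    rw [hX, Finset.sum_mul, Finset.mul_sum, ← Finset.sum_add_distrib]
    refine Finset.sum_eq_zero fun i _ => ?_
    rw [Finset.sum_mul, Finset.mul_sum, ← Finset.sum_add_distrib]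
    refine Finset.sum_eq_zero fun j _ => ?_
    rw [smul_mul_assoc, mul_smul_comm, ← smul_add, hY, ← Matrix.mul_kronecker_mul,
      ← Matrix.mul_kronecker_mul, Matrix.one_mul, Matrix.mul_one, ← Matrix.kronecker_add]
    rw [show B j * W + W * B j = 0 by rw [add_comm]; exact hanti j]
    rw [Matrix.kronecker_zero, smul_zero]
  set T : ℝ := ((ρ * X).trace).re with hT
  set w : ℝ := ((ρ * Y).trace).re with hw
  -- the key inequality, for all t
  have star_ineq : ∀ t : ℝ, T + t * w ≤ Real.sqrt (Q ^ 2 + t ^ 2) := by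
    intro t
    set s : ℝ := Real.sqrt (Q ^ 2 + t ^ 2) with hs
    have hs0 : 0 ≤ s := Real.sqrt_nonneg _
    have hs2 : s ^ 2 = Q ^ 2 + t ^ 2 := Real.sq_sqrt (by positivity)
    set Mt : Matrix (Fin a × Fin b) (Fin a × Fin b) ℂ := X + (t : ℂ) • Y with hMt
    have hMtherm : Mt.IsHermitian := by
      show Mtᴴ = Mt
      rw [hMt, Matrix.conjTranspose_add, Matrix.conjTranspose_smul, hXherm.eq, hYherm.eq,
        Complex.star_def, Complex.conj_ofReal]
    have hXY : X * Y = -(Y * X) := eq_neg_of_add_eq_zero_left hanti'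
    have hMtsq : Mt * Mt = X * X + ((t : ℂ) ^ 2) • (Y * Y) := by
      have hexp : Mt * Mt = X * X + (t : ℂ) • (X * Y + Y * X) + ((t : ℂ) * (t : ℂ)) • (Y * Y) := by
        rw [hMt]
        simp only [add_mul, mul_add, smul_mul_assoc, mul_smul_comm, smul_smul, smul_add]
        abel
      rw [hexp, hanti', smul_zero, add_zero]
      congr 1
      ring
    have hcast : ((s : ℂ)) ^ 2 = ((Q : ℂ)) ^ 2 + ((t : ℂ)) ^ 2 := by
      have := congrArg (Complex.ofReal) hs2
      push_cast at this
      exact this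
    have hpsd : (((s : ℂ) ^ 2) • (1 : Matrix (Fin a × Fin b) (Fin a × Fin b) ℂ)
        - Mt * Mt).PosSemidef := by
      rw [hMtsq, hcast, add_smul]
      rw [show ((Q : ℂ) ^ 2) • (1 : Matrix (Fin a × Fin b) (Fin a × Fin b) ℂ)
            + ((t : ℂ) ^ 2) • (1 : Matrix (Fin a × Fin b) (Fin a × Fin b) ℂ)
            - (X * X + ((t : ℂ) ^ 2) • (Y * Y))
          = (((Q : ℂ) ^ 2) • (1 : Matrix (Fin a × Fin b) (Fin a × Fin b) ℂ) - X * X)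
            + ((t : ℂ) ^ 2) • ((1 : Matrix (Fin a × Fin b) (Fin a × Fin b) ℂ) - Y * Y) by
        rw [smul_sub]; abel]
      exact hXsq.add (psd_sq_smul hYsq t)
    have hb := exp_le_of_sq_psd hMtherm hs0 hpsd hρ hρtr
    have htr : ((ρ * Mt).trace).re = T + t * w := by
      rw [hMt, Matrix.mul_add, Matrix.trace_add, Matrix.mul_smul, Matrix.trace_smul, smul_eq_mul]
      rw [Complex.add_re, Complex.re_ofReal_mul]
    rwa [htr] at hb
  -- |w| ≤ 1
  have hw1 : w ^ 2 ≤ 1 := by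
    have hY1 : (((1 : ℝ) : ℂ) ^ 2 • (1 : Matrix (Fin a × Fin b) (Fin a × Fin b) ℂ)
        - Y * Y).PosSemidef := by simpa using hYsq
    have b1 : w ≤ 1 := exp_le_of_sq_psd hYherm zero_le_one hY1 hρ hρtr
    have b2 : -w ≤ 1 := by
      have hY2 : (((1 : ℝ) : ℂ) ^ 2 • (1 : Matrix (Fin a × Fin b) (Fin a × Fin b) ℂ)
          - (-Y) * (-Y)).PosSemidef := by rw [neg_mul_neg]; exact hY1
      have := exp_le_of_sq_psd hYherm.neg zero_le_one hY2 hρ hρtr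
      rwa [Matrix.mul_neg, Matrix.trace_neg, Complex.neg_re] at this
    nlinarith
  -- final optimization
  show T ≤ Q * Real.sqrt (1 - w ^ 2)
  by_cases hcase : w ^ 2 < 1
  · set u : ℝ := Real.sqrt (1 - w ^ 2) with hu
    have hu0 : 0 < u := Real.sqrt_pos.mpr (by linarith)
    have hu2 : u ^ 2 = 1 - w ^ 2 := Real.sq_sqrt (by linarith)
    have key := star_ineq (Q * w / u)
    have hQu : Real.sqrt (Q ^ 2 + (Q * w / u) ^ 2) = Q / u := by
      rw [show Q ^ 2 + (Q * w / u) ^ 2 = (Q / u) ^ 2 by field_simp; nlinarith]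
      exact Real.sqrt_sq (by positivity)
    rw [hQu] at key
    have h1 : T * u ≤ Q * u ^ 2 := by
      have := mul_le_mul_of_nonneg_right key hu0.le
      have hmul : (T + Q * w / u * w) * u = T * u + Q * w ^ 2 := by field_simp
      have hmul2 : Q / u * u = Q := by field_simp
      rw [hmul, hmul2] at this
      nlinarith
    nlinarith
  · have hweq : w ^ 2 = 1 := le_antisymm hw1 (not_lt.mp hcase)
    rw [hweq]
    simp only [sub_self, Real.sqrt_zero, mul_zero]
    by_contra hTpos
    push_neg at hTpos
    set s : ℝ := (Q ^ 2 + 1) / (2 * T) with hsdef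
    have hspos : 0 < s := by positivity
    have key := star_ineq (s * w)
    have h1 : s * w * w = s := by rw [mul_assoc, ← sq, hweq, mul_one]
    have h2 : Q ^ 2 + (s * w) ^ 2 = Q ^ 2 + s ^ 2 := by rw [mul_pow, hweq, mul_one]
    rw [h1, h2] at key
    have hlt : Real.sqrt (Q ^ 2 + s ^ 2) < T + s := by
      rw [show Real.sqrt (Q ^ 2 + s ^ 2) < T + s ↔ Q ^ 2 + s ^ 2 < (T + s) ^ 2 from
        Real.sqrt_lt' (by linarith)]
      have : 2 * s * T = Q ^ 2 + 1 := by rw [hsdef]; field_simp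
      nlinarith
    linarith
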